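/- Let q ≥ 2 and let ℙ be a dense q-refining partition sequence of [0,1] that is balanced, in the sense that there exists c > 0 such that for every n, max_i |t_{i+1}^n − t_i^n| ≤ c · min_i |t_{i+1}^n − t_i^n|. Then the associated increasing homeomorphism φ with φ(t_i^n) = i/q^n is Lipschitz, and its inverse φ^{−1} is Lipschitz as well. -/
import Mathlib


/-- if the dense q-refining partition sequence is balanced
(`max_i Δt_i^n ≤ c · min_i Δt_i^n` for all `n`), then the associated increasing
homeomorphism `φ` with `φ(t_i^n) = i/q^n` is Lipschitz, and so is its inverse. -/
theorem stmt11 (q : ℕ) (hq : 2 ≤ q) (pts : ℕ → ℕ → ℝ)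
    (h0 : ∀ n, pts n 0 = 0) (h1 : ∀ n, pts n (q ^ n) = 1)
    (hmono : ∀ n, ∀ i < q ^ n, pts n i < pts n (i + 1))
    (hmem : ∀ n, ∀ i ≤ q ^ n, pts n i ∈ Set.Icc (0 : ℝ) 1)
    (hrefine : ∀ n, ∀ i ≤ q ^ n, pts n i = pts (n + 1) (q * i))
    (hdense : Set.Icc (0 : ℝ) 1 ⊆ closure {x : ℝ | ∃ n, ∃ i ≤ q ^ n, pts n i = x})
    (c : ℝ) (hc : 0 < c)
    (hbal : ∀ n, ∀ i < q ^ n, ∀ j < q ^ n,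
      pts n (i + 1) - pts n i ≤ c * (pts n (j + 1) - pts n j))
    (φ : Set.Icc (0 : ℝ) 1 ≃ₜ Set.Icc (0 : ℝ) 1)
    (hφmono : StrictMono (fun a => (φ a : ℝ)))
    (hφpts : ∀ n, ∀ i, ∀ hi : i ≤ q ^ n,
      ((φ ⟨pts n i, hmem n i hi⟩ : Set.Icc (0 : ℝ) 1) : ℝ) = (i : ℝ) / q ^ n) :
    (∃ K : ℝ, 0 ≤ K ∧ ∀ a b : Set.Icc (0 : ℝ) 1,
      |(φ a : ℝ) - (φ b : ℝ)| ≤ K * |(a : ℝ) - (b : ℝ)|) ∧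
    (∃ K : ℝ, 0 ≤ K ∧ ∀ a b : Set.Icc (0 : ℝ) 1,
      |(φ.symm a : ℝ) - (φ.symm b : ℝ)| ≤ K * |(a : ℝ) - (b : ℝ)|) := by
  have hq0 : ∀ n : ℕ, (0 : ℝ) < (q : ℝ) ^ n := fun n => by positivity
  -- telescoping sum
  have hsum : ∀ n, ∑ i ∈ Finset.range (q ^ n), (pts n (i + 1) - pts n i) = 1 := by
    intro n
    rw [Finset.sum_range_sub (pts n), h1, h0, sub_zero]
  -- lower bound on increments: 1 ≤ q^n * c * Δ_j
  have hlow : ∀ n, ∀ j < q ^ n, 1 / (c * (q : ℝ) ^ n) ≤ pts n (j + 1) - pts n j := by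
    intro n j hj
    have h1' : (1 : ℝ) ≤ (q ^ n : ℕ) * (c * (pts n (j + 1) - pts n j)) := by
      calc (1 : ℝ) = ∑ i ∈ Finset.range (q ^ n), (pts n (i + 1) - pts n i) := (hsum n).symm
        _ ≤ ∑ _i ∈ Finset.range (q ^ n), c * (pts n (j + 1) - pts n j) := by
            apply Finset.sum_le_sum
            intro i hi
            exact hbal n i (Finset.mem_range.mp hi) j hj
        _ = (q ^ n : ℕ) * (c * (pts n (j + 1) - pts n j)) := by
            rw [Finset.sum_const, Finset.card_range, nsmul_eq_mul]
    rw [Nat.cast_pow] at h1'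
    rw [div_le_iff₀ (by positivity)]
    nlinarith [hq0 n]
  -- upper bound on increments: Δ_i ≤ c / q^n
  have hupp : ∀ n, ∀ i < q ^ n, pts n i ≤ pts n (i + 1) →
      pts n (i + 1) - pts n i ≤ c / (q : ℝ) ^ n := by
    intro n i hi _
    have h1' : (q ^ n : ℕ) * (pts n (i + 1) - pts n i) ≤ c := by
      calc ((q ^ n : ℕ) : ℝ) * (pts n (i + 1) - pts n i)
          = ∑ _j ∈ Finset.range (q ^ n), (pts n (i + 1) - pts n i) := by
            rw [Finset.sum_const, Finset.card_range, nsmul_eq_mul]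
        _ ≤ ∑ j ∈ Finset.range (q ^ n), c * (pts n (j + 1) - pts n j) := by
            apply Finset.sum_le_sum
            intro j hj
            exact hbal n i hi j (Finset.mem_range.mp hj)
        _ = c * ∑ j ∈ Finset.range (q ^ n), (pts n (j + 1) - pts n j) := by
            rw [Finset.mul_sum]
        _ = c := by rw [hsum n, mul_one]
    rw [Nat.cast_pow] at h1'
    rw [le_div_iff₀ (hq0 n)]
    linarith
  -- differences between partition points at the same level
  have hdiff : ∀ n i j, i ≤ j → j ≤ q ^ n →
      pts n j - pts n i = ∑ k ∈ Finset.Ico i j, (pts n (k + 1) - pts n k) := by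
    intro n i j hij _
    rw [Finset.sum_Ico_eq_sub _ hij, Finset.sum_range_sub (pts n), Finset.sum_range_sub (pts n)]
    ring
  have estLow : ∀ n i j, i ≤ j → j ≤ q ^ n →
      ((j : ℝ) - i) / (c * (q : ℝ) ^ n) ≤ pts n j - pts n i := by
    intro n i j hij hj
    rw [hdiff n i j hij hj]
    calc ((j : ℝ) - i) / (c * (q : ℝ) ^ n)
        = ∑ _k ∈ Finset.Ico i j, 1 / (c * (q : ℝ) ^ n) := by
          rw [Finset.sum_const, Nat.card_Ico, nsmul_eq_mul, Nat.cast_sub hij]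
          ring
      _ ≤ ∑ k ∈ Finset.Ico i j, (pts n (k + 1) - pts n k) := by
          apply Finset.sum_le_sum
          intro k hk
          exact hlow n k (lt_of_lt_of_le (Finset.mem_Ico.mp hk).2 hj)
  have estUpp : ∀ n i j, i ≤ j → j ≤ q ^ n →
      pts n j - pts n i ≤ c * (((j : ℝ) - i) / (q : ℝ) ^ n) := by
    intro n i j hij hj
    rw [hdiff n i j hij hj]
    calc ∑ k ∈ Finset.Ico i j, (pts n (k + 1) - pts n k)
        ≤ ∑ _k ∈ Finset.Ico i j, c / (q : ℝ) ^ n := by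
          apply Finset.sum_le_sum
          intro k hk
          have hk' : k < q ^ n := lt_of_lt_of_le (Finset.mem_Ico.mp hk).2 hj
          exact hupp n k hk' (le_of_lt (hmono n k hk'))
      _ = c * (((j : ℝ) - i) / (q : ℝ) ^ n) := by
          rw [Finset.sum_const, Nat.card_Ico, nsmul_eq_mul, Nat.cast_sub hij]
          ring
  -- monotonicity of pts along indices
  have pmono : ∀ n i j, i ≤ j → j ≤ q ^ n → pts n i ≤ pts n j := by
    intro n i j hij hj
    have h := estLow n i j hij hj
    have h2 : (0 : ℝ) ≤ ((j : ℝ) - i) / (c * (q : ℝ) ^ n) := by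
      apply div_nonneg _ (by positivity)
      have := (Nat.cast_le (α := ℝ)).mpr hij
      linarith
    linarith
  -- two-sided abs estimate at a single level
  have estAbs : ∀ n i j, i ≤ q ^ n → j ≤ q ^ n →
      |(i : ℝ) / (q : ℝ) ^ n - (j : ℝ) / (q : ℝ) ^ n| ≤ c * |pts n i - pts n j| ∧
      |pts n i - pts n j| ≤ c * |(i : ℝ) / (q : ℝ) ^ n - (j : ℝ) / (q : ℝ) ^ n| := by
    have key : ∀ n i j, i ≤ j → j ≤ q ^ n →
        |(i : ℝ) / (q : ℝ) ^ n - (j : ℝ) / (q : ℝ) ^ n| ≤ c * |pts n i - pts n j| ∧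
        |pts n i - pts n j| ≤ c * |(i : ℝ) / (q : ℝ) ^ n - (j : ℝ) / (q : ℝ) ^ n| := by
      intro n i j hij hj
      have hij' : (i : ℝ) ≤ (j : ℝ) := Nat.cast_le.mpr hij
      have hple : pts n i ≤ pts n j := pmono n i j hij hj
      have hd1 : (i : ℝ) / (q : ℝ) ^ n ≤ (j : ℝ) / (q : ℝ) ^ n :=
        div_le_div_of_nonneg_right hij' (hq0 n).le
      rw [abs_sub_comm ((i:ℝ)/_) _, abs_sub_comm (pts n i) _,
        abs_of_nonneg (by linarith), abs_of_nonneg (by linarith)]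
      constructor
      · have h := estLow n i j hij hj
        rw [div_le_iff₀ (by positivity)] at h
        have : ((j : ℝ) - i) / (q : ℝ) ^ n ≤ c * (pts n j - pts n i) := by
          rw [div_le_iff₀ (hq0 n)]
          nlinarith [hq0 n]
        calc (j : ℝ) / (q : ℝ) ^ n - (i : ℝ) / (q : ℝ) ^ n = ((j : ℝ) - i) / (q : ℝ) ^ n := by
              ring
          _ ≤ c * (pts n j - pts n i) := this
      · have h := estUpp n i j hij hj
        calc pts n j - pts n i ≤ c * (((j : ℝ) - i) / (q : ℝ) ^ n) := h
          _ = c * ((j : ℝ) / (q : ℝ) ^ n - (i : ℝ) / (q : ℝ) ^ n) := by ring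
    intro n i j hi hj
    rcases le_total i j with h | h
    · exact key n i j h hj
    · have := key n j i h hi
      rw [abs_sub_comm ((j:ℝ)/_) _, abs_sub_comm (pts n j) _] at this
      exact this
  -- refinement to arbitrary deeper levels
  have hle' : ∀ n m i, i ≤ q ^ n → q ^ m * i ≤ q ^ (n + m) := by
    intro n m i hi
    calc q ^ m * i ≤ q ^ m * q ^ n := Nat.mul_le_mul_left _ hi
      _ = q ^ (n + m) := by rw [← pow_add, Nat.add_comm]
  have href : ∀ n m i, i ≤ q ^ n → pts n i = pts (n + m) (q ^ m * i) := by
    intro n m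
    induction m with
    | zero => intro i hi; simp
    | succ m ih =>
        intro i hi
        have h1' := ih i hi
        have h2' := hrefine (n + m) (q ^ m * i) (hle' n m i hi)
        have harg : q * (q ^ m * i) = q ^ (m + 1) * i := by ring
        rw [h1', h2', harg]
        rfl
  -- the dense set of partition points in the subtype
  set S : Set (Set.Icc (0 : ℝ) 1) := {x | ∃ n, ∃ i ≤ q ^ n, (x : ℝ) = pts n i} with hS
  have hdS : Dense S := by
    intro x
    rw [closure_subtype]
    refine closure_mono ?_ (hdense x.2)
    rintro r ⟨n, i, hi, hr⟩
    exact ⟨⟨r, hr ▸ hmem n i hi⟩, ⟨n, i, hi, by simp [← hr]⟩, rfl⟩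
  -- pair estimate for partition points at possibly different levels
  have pairEst : ∀ a b : Set.Icc (0 : ℝ) 1, a ∈ S → b ∈ S →
      |(φ a : ℝ) - (φ b : ℝ)| ≤ c * |(a : ℝ) - (b : ℝ)| ∧
      |(a : ℝ) - (b : ℝ)| ≤ c * |(φ a : ℝ) - (φ b : ℝ)| := by
    rintro a b ⟨n, i, hi, ha⟩ ⟨m, j, hj, hb⟩
    set N := n + m with hN
    set i' := q ^ m * i with hi'
    set j' := q ^ n * j with hj'
    have hi'le : i' ≤ q ^ N := hle' n m i hi
    have hj'le : j' ≤ q ^ N := by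
      have := hle' m n j hj
      rwa [Nat.add_comm m n] at this
    have ha' : (a : ℝ) = pts N i' := by rw [ha, href n m i hi]
    have hb' : (b : ℝ) = pts N j' := by
      rw [hb, href m n j hj]
      congr 1
      omega
    have haeq : a = ⟨pts N i', hmem N i' hi'le⟩ := Subtype.ext ha'
    have hbeq : b = ⟨pts N j', hmem N j' hj'le⟩ := Subtype.ext hb'
    have hφa : (φ a : ℝ) = (i' : ℝ) / (q : ℝ) ^ N := by
      rw [haeq, hφpts N i' hi'le]
    have hφb : (φ b : ℝ) = (j' : ℝ) / (q : ℝ) ^ N := by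
      rw [hbeq, hφpts N j' hj'le]
    have := estAbs N i' j' hi'le hj'le
    rw [ha', hb', hφa, hφb]
    exact ⟨this.1, this.2⟩
  -- closed-set density argument
  have closArg : ∀ f : Set.Icc (0 : ℝ) 1 → Set.Icc (0 : ℝ) 1, Continuous f →
      ∀ T : Set (Set.Icc (0 : ℝ) 1), Dense T →
      (∀ a ∈ T, ∀ b ∈ T, |(f a : ℝ) - (f b : ℝ)| ≤ c * |(a : ℝ) - (b : ℝ)|) →
      ∀ a b, |(f a : ℝ) - (f b : ℝ)| ≤ c * |(a : ℝ) - (b : ℝ)| := by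
    intro f hf T hT hTlip a b
    set C : Set (Set.Icc (0 : ℝ) 1 × Set.Icc (0 : ℝ) 1) :=
      {p | |(f p.1 : ℝ) - (f p.2 : ℝ)| ≤ c * |(p.1 : ℝ) - (p.2 : ℝ)|} with hC
    have hCclosed : IsClosed C := by
      apply isClosed_le
      · exact (((continuous_subtype_val.comp (hf.comp continuous_fst)).sub
          (continuous_subtype_val.comp (hf.comp continuous_snd))).abs)
      · exact (continuous_const.mul
          (((continuous_subtype_val.comp continuous_fst).sub
            (continuous_subtype_val.comp continuous_snd)).abs))
    have hsub : T ×ˢ T ⊆ C := by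
      rintro ⟨x, y⟩ ⟨hx, hy⟩
      exact hTlip x hx y hy
    have huniv : (Set.univ : Set (Set.Icc (0 : ℝ) 1 × Set.Icc (0 : ℝ) 1)) ⊆ C := by
      rw [← (hT.prod hT).closure_eq]
      exact hCclosed.closure_subset_iff.mpr hsub
    exact huniv (Set.mem_univ (a, b))
  constructor
  · refine ⟨c, hc.le, ?_⟩
    exact closArg φ φ.continuous S hdS (fun a ha b hb => (pairEst a b ha hb).1)
  · refine ⟨c, hc.le, ?_⟩
    have hdS2 : Dense (φ '' S) := by
      rw [dense_iff_closure_eq, ← φ.image_closure, hdS.closure_eq, Set.image_univ,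
        φ.surjective.range_eq]
    apply closArg φ.symm φ.symm.continuous (φ '' S) hdS2
    rintro a ⟨x, hx, rfl⟩ b ⟨y, hy, rfl⟩
    simpa using (pairEst x y hx hy).2
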